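/- Let A : R^E → U be a linear map between finite-dimensional real vector spaces, and suppose there is no nonzero vector w in the nonnegative orthant of R^E with Aw = 0. Then there exists a linear functional f on U such that the transpose A^∨f is a nonzero vector with all coordinates nonnegative in R^E. -/

import Mathlib

theorem stmt_15 (E : Type*) [Fintype E] [Nonempty E] [DecidableEq E]
    (U : Type*) [AddCommGroup U] [Module ℝ U] [FiniteDimensional ℝ U]
    (A : (E → ℝ) →ₗ[ℝ] U)
    (hker : ∀ w : E → ℝ, (∀ e, 0 ≤ w e) → A w = 0 → w = 0) :
    ∃ f : U →ₗ[ℝ] ℝ,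
      (∀ e : E, 0 ≤ f (A (Pi.single e 1))) ∧
      (∃ e : E, f (A (Pi.single e 1)) ≠ 0) := by
  classical
  -- move to a concrete finite-dimensional space
  set n := Module.finrank ℝ U
  let b := Module.finBasis ℝ U
  let eU : U ≃ₗ[ℝ] (Fin n → ℝ) := b.equivFun
  let A' : (E → ℝ) →ₗ[ℝ] (Fin n → ℝ) := eU.toLinearMap ∘ₗ A
  let K : Set (Fin n → ℝ) := A' '' stdSimplex ℝ E
  have hconv : Convex ℝ K := (convex_stdSimplex ℝ E).linear_image A'
  have hcomp : IsCompact K :=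
    (isCompact_stdSimplex ℝ E).image A'.continuous_of_finiteDimensional
  have h0 : (0 : Fin n → ℝ) ∉ K := by
    rintro ⟨w, hw, hw0⟩
    have hAw : A w = 0 := by
      have : eU (A w) = 0 := hw0
      simpa using eU.injective (by simpa using this)
    have hwz : w = 0 := hker w hw.1 hAw
    have := hw.2
    rw [hwz] at this
    simp at this
  obtain ⟨f, u, hfu, hK⟩ :=
    geometric_hahn_banach_point_closed hconv hcomp.isClosed h0
  have hu : 0 < u := by simpa using hfu
  refine ⟨f.toLinearMap.comp eU.toLinearMap, ?_, ?_⟩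
  · intro e
    have hmem : Pi.single e (1:ℝ) ∈ stdSimplex ℝ E := by
      constructor
      · intro x
        rcases eq_or_ne x e with rfl | hx
        · simp
        · simp [Pi.single_apply, hx]
      · simp [Pi.single_apply]
    have := hK _ ⟨_, hmem, rfl⟩
    have : u < f (A' (Pi.single e 1)) := this
    have hpos : 0 < f (A' (Pi.single e 1)) := lt_trans hu this
    simpa [A'] using hpos.le
  · obtain ⟨e⟩ := (inferInstance : Nonempty E)
    refine ⟨e, ?_⟩
    have hmem : Pi.single e (1:ℝ) ∈ stdSimplex ℝ E := by
      constructor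
      · intro x
        rcases eq_or_ne x e with rfl | hx
        · simp
        · simp [Pi.single_apply, hx]
      · simp [Pi.single_apply]
    have := hK _ ⟨_, hmem, rfl⟩
    have hpos : 0 < f (A' (Pi.single e 1)) := lt_trans hu this
    simpa [A'] using hpos.ne'
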